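/- Let K be a field with more than 2 elements, E a finite-dimensional K-vector space, and let 𝒢 be the affine group of E (semidirect product of translations and GL(E)). Then every group-theoretic section s : GL(E) → 𝒢 of the canonical projection 𝒢 → GL(E) is of the form f ↦ f_a for some point a, i.e., s(GL(E)) is the stabilizer of a point a. -/

import Mathlib

/-- If `K` is a field with more than two elements and `E` a finite-dimensional
`K`-vector space, then every group-theoretic section of the projection from the
affine group of `E` to `GL(E)` (sending an affine automorphism to its linear part)
is of the form `f ↦ f_a`, i.e. its image is the stabilizer of some point `a`. -/
theorem stmt_0 (K : Type*) [Field K] (hK : ∃ x : K, x ≠ 0 ∧ x ≠ 1)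
    (E : Type*) [AddCommGroup E] [Module K E] [FiniteDimensional K E]
    (s : (E ≃ₗ[K] E) →* (E ≃ᵃ[K] E))
    (hs : ∀ f : E ≃ₗ[K] E, (s f).linear = f) :
    ∃ a : E, ∀ f : E ≃ₗ[K] E, s f a = a := by
  obtain ⟨x, hx0, hx1⟩ := hK
  have hsub : (1 : K) - x ≠ 0 := sub_ne_zero.mpr (Ne.symm hx1)
  -- the homothety of ratio x
  set h : E ≃ₗ[K] E :=
    { toFun := fun v => x • v
      invFun := fun v => x⁻¹ • v
      map_add' := fun a b => smul_add x a b
      map_smul' := fun c v => smul_comm x c v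
      left_inv := fun v => by simp [smul_smul, inv_mul_cancel₀ hx0]
      right_inv := fun v => by simp [smul_smul, mul_inv_cancel₀ hx0] } with hdef
  have h_apply : ∀ v : E, h v = x • v := fun v => rfl
  -- decomposition of an affine equiv of E
  have hdec : ∀ (φ : E ≃ᵃ[K] E) (b : E), φ b = φ.linear b + φ 0 := by
    intro φ b
    have := φ.toAffineMap.linearMap_vsub b 0
    simp only [vsub_eq_sub, sub_zero, AffineEquiv.coe_toAffineMap] at this
    have h2 : φ b - φ 0 = φ.linear b := this.symm
    exact (eq_add_of_sub_eq h2)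
  set c : E := s h 0 with hcdef
  set a : E := (1 - x)⁻¹ • c with hadef
  have key : ∀ b : E, s h b = x • b + c := by
    intro b
    rw [hdec (s h) b, hs h, h_apply]
  -- a is the unique fixed point of s h
  have hfixa : s h a = a := by
    have hK2 : x * (1 - x)⁻¹ = (1 - x)⁻¹ - 1 := by
      field_simp
      ring
    rw [key a, hadef, smul_smul, hK2, sub_smul, one_smul, sub_add_cancel]
  have huniq : ∀ b : E, s h b = b → b = a := by
    intro b hb
    rw [key b] at hb
    have h1 : (1 - x) • b = c := by
      rw [sub_smul, one_smul, sub_eq_iff_eq_add]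
      conv_lhs => rw [← hb]
      exact add_comm _ _
    rw [hadef, ← h1, smul_smul, inv_mul_cancel₀ hsub, one_smul]
  refine ⟨a, fun f => ?_⟩
  -- h is central
  have hcomm : f * h = h * f := by
    ext v
    show f (h v) = h (f v)
    rw [h_apply, h_apply, map_smul]
  have hmul : s f * s h = s h * s f := by
    rw [← map_mul, hcomm, map_mul]
  have key2 : s f (s h a) = s h (s f a) := congrArg (fun φ : E ≃ᵃ[K] E => φ a) hmul
  rw [hfixa] at key2
  exact (huniq _ key2.symm)
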